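/- Let X be a nonempty finite design space, let p and s be natural numbers with 0 < s and s < p, let m : X → Matrix (Fin p) (Fin p) ℝ assign to each design point a symmetric positive semidefinite matrix, and let A : Matrix (Fin p) (Fin s) ℝ have rank s. Suppose w* is a design such that M(w*) is positive definite and w* maximizes w ↦ -log(det(Aᵀ * M(w)⁻¹ * A)) over all designs with positive definite information matrix. Then for every x ∈ X with w*(x) > 0, trace(M(w*)⁻¹ * A * (Aᵀ * M(w*)⁻¹ * A)⁻¹ * Aᵀ * M(w*)⁻¹ * m(x)) = s. -/

import Mathlib

open Matrix BigOperators

attribute [local instance] Matrix.linftyOpNormedRing Matrix.linftyOpNormedAlgebra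

noncomputable def DA_entryCLM {n : ℕ} (i j : Fin n) : Matrix (Fin n) (Fin n) ℝ →L[ℝ] ℝ :=
  LinearMap.toContinuousLinearMap
    { toFun := fun X => X i j
      map_add' := fun _ _ => rfl
      map_smul' := fun _ _ => rfl }

lemma DA_aux_inv_entries {n : ℕ} (Mm B : Matrix (Fin n) (Fin n) ℝ)
    (hMm : IsUnit Mm) :
    ∀ i j, HasDerivAt (fun t : ℝ => ((1 - t) • Mm + t • B)⁻¹ i j)
      ((-(Mm⁻¹ * (B - Mm) * Mm⁻¹)) i j) 0 := by
  set N : ℝ → Matrix (Fin n) (Fin n) ℝ := fun t => (1 - t) • Mm + t • B with hN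
  have hNd : HasDerivAt N (B - Mm) 0 := by
    have h1 : HasDerivAt (fun t : ℝ => (1 - t) • Mm) ((-1 : ℝ) • Mm) 0 :=
      ((hasDerivAt_id 0).const_sub 1).smul_const Mm
    have h2 : HasDerivAt (fun t : ℝ => t • B) ((1 : ℝ) • B) 0 :=
      (hasDerivAt_id 0).smul_const B
    have h3 := h1.add h2
    have : N = fun t : ℝ => (1 - t) • Mm + t • B := hN
    rw [this]
    rw [show B - Mm = (-1 : ℝ) • Mm + (1 : ℝ) • B by rw [neg_smul, one_smul, one_smul, sub_eq_neg_add]]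
    exact h3
  have hN0 : N 0 = Mm := by simp [hN]
  set u : (Matrix (Fin n) (Fin n) ℝ)ˣ := hMm.unit with hu
  have huv : (u : Matrix (Fin n) (Fin n) ℝ) = Mm := hMm.unit_spec
  have hinv : HasDerivAt (fun t => Ring.inverse (N t))
      ((-ContinuousLinearMap.mulLeftRight ℝ _ (↑u⁻¹) (↑u⁻¹)) (B - Mm)) 0 := by
    have hfd : HasFDerivAt Ring.inverse
        (-ContinuousLinearMap.mulLeftRight ℝ (Matrix (Fin n) (Fin n) ℝ) (↑u⁻¹) (↑u⁻¹)) (N 0) := by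
      rw [hN0, ← huv]
      exact hasFDerivAt_ringInverse u
    exact hfd.comp_hasDerivAt 0 hNd
  have huinv : ((u⁻¹ : (Matrix (Fin n) (Fin n) ℝ)ˣ) : Matrix (Fin n) (Fin n) ℝ) = Mm⁻¹ := by
    rw [← huv, ← Matrix.coe_units_inv]
  have hval : ((-ContinuousLinearMap.mulLeftRight ℝ _ (↑u⁻¹) (↑u⁻¹)) (B - Mm))
      = -(Mm⁻¹ * (B - Mm) * Mm⁻¹) := by
    simp [ContinuousLinearMap.mulLeftRight_apply, huinv, mul_assoc]
  rw [hval] at hinv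
  have hfun : (fun t => Ring.inverse (N t)) = fun t => (N t)⁻¹ := by
    funext t; rw [Matrix.nonsing_inv_eq_ringInverse]
  rw [hfun] at hinv
  intro i j
  have := ((DA_entryCLM i j).hasFDerivAt.comp_hasDerivAt 0 hinv)
  exact this

lemma DA_aux_det_one {n : ℕ} (H : ℝ → Matrix (Fin n) (Fin n) ℝ)
    (H' : Matrix (Fin n) (Fin n) ℝ) (t0 : ℝ)
    (hH : ∀ i j, HasDerivAt (fun t => H t i j) (H' i j) t0) (h1 : H t0 = 1) :
    HasDerivAt (fun t => (H t).det) H'.trace t0 := by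
  have hfun : (fun t => (H t).det)
      = fun t => ∑ σ : Equiv.Perm (Fin n),
          ((Equiv.Perm.sign σ : ℤ) : ℝ) * ∏ i, H t (σ i) i := by
    funext t
    rw [Matrix.det_apply]
    simp [Units.smul_def, zsmul_eq_mul]
  rw [hfun]
  have key : HasDerivAt (fun t => ∑ σ : Equiv.Perm (Fin n),
      ((Equiv.Perm.sign σ : ℤ) : ℝ) * ∏ i, H t (σ i) i)
      (∑ σ : Equiv.Perm (Fin n), ((Equiv.Perm.sign σ : ℤ) : ℝ) *
        (∑ i, (∏ j ∈ Finset.univ.erase i, H t0 (σ j) j) • H' (σ i) i)) t0 := by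
    apply HasDerivAt.fun_sum
    intro σ _
    exact (HasDerivAt.fun_finsetProd (fun i _ => hH (σ i) i)).const_mul _
  convert key using 1
  rw [Finset.sum_eq_single_of_mem (1 : Equiv.Perm (Fin n)) (Finset.mem_univ _)]
  · simp only [Equiv.Perm.sign_one, Units.val_one, Int.cast_one, one_mul,
      Equiv.Perm.coe_one, id_eq, h1, Matrix.one_apply_eq, Finset.prod_const_one,
      one_smul, Matrix.trace]
    rfl
  · intro σ _ hσ
    have : ∀ i : Fin n, (∏ j ∈ Finset.univ.erase i, H t0 (σ j) j) = 0 := by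
      intro i
      obtain ⟨k, hk⟩ : ∃ k, σ k ≠ k := by
        by_contra h
        push_neg at h
        exact hσ (Equiv.ext h)
      have hk' : σ (σ k) ≠ σ k := fun h => hk (σ.injective h)
      rcases eq_or_ne k i with rfl | hki
      · refine Finset.prod_eq_zero (Finset.mem_erase.2 ⟨(by simpa using hk'), Finset.mem_univ _⟩) ?_
        simp [h1, Matrix.one_apply, hk']
      · refine Finset.prod_eq_zero (Finset.mem_erase.2 ⟨hki, Finset.mem_univ _⟩) ?_
        simp [h1, Matrix.one_apply, hk]
    simp [this]

lemma DA_aux_mul_entries {n k : ℕ} (P : Matrix (Fin k) (Fin n) ℝ) (Q : Matrix (Fin n) (Fin k) ℝ)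
    (F : ℝ → Matrix (Fin n) (Fin n) ℝ) (F' : Matrix (Fin n) (Fin n) ℝ) (t0 : ℝ)
    (hF : ∀ i j, HasDerivAt (fun t => F t i j) (F' i j) t0) :
    ∀ i j, HasDerivAt (fun t => (P * F t * Q) i j) ((P * F' * Q) i j) t0 := by
  intro i j
  have hfun : (fun t => (P * F t * Q) i j)
      = fun t => ∑ l, (∑ a, P i a * F t a l) * Q l j := by
    funext t; simp [Matrix.mul_apply]
  rw [hfun]
  have h : HasDerivAt (fun t => ∑ l, (∑ a, P i a * F t a l) * Q l j)
      (∑ l, (∑ a, P i a * F' a l) * Q l j) t0 := by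
    apply HasDerivAt.fun_sum; intro l _
    exact (HasDerivAt.fun_sum fun a _ => (hF a l).const_mul (P i a)).mul_const (Q l j)
  have hval : (P * F' * Q) i j = ∑ l, (∑ a, P i a * F' a l) * Q l j := by
    simp [Matrix.mul_apply]
  rw [hval]; exact h

theorem DA_sensitivity_support_points
    {X : Type*} [Fintype X] [Nonempty X] (p s : ℕ) (hs : 0 < s) (hsp : s < p)
    (m : X → Matrix (Fin p) (Fin p) ℝ) (hm : ∀ x, (m x).PosSemidef)
    (A : Matrix (Fin p) (Fin s) ℝ) (hA : A.rank = s)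
    (wstar : X → ℝ) (hw0 : ∀ x, 0 ≤ wstar x) (hw1 : ∑ x, wstar x = 1)
    (hM : (∑ x, wstar x • m x).PosDef)
    (hopt : ∀ w : X → ℝ, (∀ x, 0 ≤ w x) → ∑ x, w x = 1 → (∑ x, w x • m x).PosDef →
      -Real.log (Aᵀ * (∑ x, w x • m x)⁻¹ * A).det ≤
        -Real.log (Aᵀ * (∑ x, wstar x • m x)⁻¹ * A).det) :
    ∀ x : X, 0 < wstar x →
      ((∑ y, wstar y • m y)⁻¹ * A * (Aᵀ * (∑ y, wstar y • m y)⁻¹ * A)⁻¹ * Aᵀ *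
          (∑ y, wstar y • m y)⁻¹ * m x).trace = (s : ℝ) := by
  classical
  intro x hx
  set Mmat : Matrix (Fin p) (Fin p) ℝ := ∑ y, wstar y • m y with hMmat
  have hMdet : IsUnit Mmat.det := isUnit_iff_ne_zero.2 (ne_of_gt hM.det_pos)
  have hMinv : Mmat⁻¹.PosDef := hM.inv
  set C : Matrix (Fin s) (Fin s) ℝ := Aᵀ * Mmat⁻¹ * A with hC
  -- injectivity of A
  have hker : ∀ v : Fin s → ℝ, v ≠ 0 → A.mulVec v ≠ 0 := by
    intro v hv hAv
    have hfr : Module.finrank ℝ (LinearMap.ker A.mulVecLin) = 0 := by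
      have h2 := LinearMap.finrank_range_add_finrank_ker A.mulVecLin
      rw [Matrix.rank] at hA
      have h3 : Module.finrank ℝ (Fin s → ℝ) = s := by simp
      omega
    have hbot : LinearMap.ker A.mulVecLin = ⊥ := Submodule.finrank_eq_zero.mp hfr
    have hv0 : v ∈ LinearMap.ker A.mulVecLin := by
      simpa [LinearMap.mem_ker, Matrix.mulVecLin_apply] using hAv
    rw [hbot] at hv0
    exact hv (by simpa using hv0)
  have hCpd : C.PosDef := by
    rw [Matrix.posDef_iff_dotProduct_mulVec]
    constructor
    · have h1 : Aᴴ = Aᵀ := by ext i j; simp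
      have := Matrix.isHermitian_conjTranspose_mul_mul A hMinv.1
      rwa [h1] at this
    · intro v hv
      have hAv : A.mulVec v ≠ 0 := hker v hv
      have hrw : star v ⬝ᵥ (C *ᵥ v) = star (A *ᵥ v) ⬝ᵥ (Mmat⁻¹ *ᵥ (A *ᵥ v)) := by
        simp [hC, ← Matrix.mulVec_mulVec, Matrix.dotProduct_mulVec,
          Matrix.vecMul_transpose, star_trivial]
      rw [hrw]
      exact hMinv.dotProduct_mulVec_pos hAv
  have hCdet : IsUnit C.det := isUnit_iff_ne_zero.2 (ne_of_gt hCpd.det_pos)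
  set K : Matrix (Fin p) (Fin p) ℝ := Mmat⁻¹ * A * C⁻¹ * Aᵀ * Mmat⁻¹ with hK
  have htr1 : ((1 : Matrix (Fin s) (Fin s) ℝ)).trace = (s : ℝ) := by
    simp [Matrix.trace_one]
  -- sensitivity bound at every point
  have hd_le : ∀ z : X, ((K * m z).trace : ℝ) ≤ s := by
    intro z
    set B : Matrix (Fin p) (Fin p) ℝ := m z with hB
    set N : ℝ → Matrix (Fin p) (Fin p) ℝ := fun t => (1 - t) • Mmat + t • B with hNdef
    have hMu : IsUnit Mmat := (Matrix.isUnit_iff_isUnit_det _).2 hMdet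
    have hinv := DA_aux_inv_entries Mmat B hMu
    set D : Matrix (Fin p) (Fin p) ℝ := -(Mmat⁻¹ * (B - Mmat) * Mmat⁻¹) with hD
    set P : Matrix (Fin s) (Fin p) ℝ := C⁻¹ * Aᵀ with hP
    have hmulent := DA_aux_mul_entries P A (fun t => (N t)⁻¹) D 0 hinv
    have hN0 : N 0 = Mmat := by simp [hNdef]
    have hPMA : P * Mmat⁻¹ * A = 1 := by
      have h1 : P * Mmat⁻¹ * A = C⁻¹ * (Aᵀ * Mmat⁻¹ * A) := by
        rw [hP]; simp only [Matrix.mul_assoc]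
      rw [h1, ← hC, Matrix.nonsing_inv_mul C hCdet]
    have hH0 : P * (N 0)⁻¹ * A = 1 := by rw [hN0]; exact hPMA
    have hdet : HasDerivAt (fun t => (P * (N t)⁻¹ * A).det) (P * D * A).trace 0 :=
      DA_aux_det_one _ _ 0 hmulent hH0
    have hgd : HasDerivAt (fun t => C.det * (P * (N t)⁻¹ * A).det)
        (C.det * (P * D * A).trace) 0 := hdet.const_mul _
    have hg0ne : C.det * (P * (N 0)⁻¹ * A).det ≠ 0 := by
      rw [hH0]; simp [ne_of_gt hCpd.det_pos]
    have hlog := (hgd.log hg0ne).neg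
    have hval : -(C.det * (P * D * A).trace / (C.det * (P * (N 0)⁻¹ * A).det))
        = -(P * D * A).trace := by
      rw [hH0, Matrix.det_one, mul_one,
        mul_div_cancel_left₀ _ (ne_of_gt hCpd.det_pos)]
    rw [hval] at hlog
    have hfid : (fun t => -Real.log (C.det * (P * (N t)⁻¹ * A).det))
        = fun t => -Real.log ((Aᵀ * (N t)⁻¹ * A).det) := by
      funext t
      congr 1
      rw [← Matrix.det_mul]
      congr 1
      rw [hP]
      rw [show C * (C⁻¹ * Aᵀ * (N t)⁻¹ * A) = C * C⁻¹ * (Aᵀ * ((N t)⁻¹ * A)) from by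
        simp only [Matrix.mul_assoc]]
      rw [Matrix.mul_nonsing_inv C hCdet, one_mul]
      simp only [Matrix.mul_assoc]
    change HasDerivAt (fun t => -Real.log (C.det * (P * (N t)⁻¹ * A).det)) _ 0 at hlog
    rw [hfid] at hlog
    -- local maximality
    have hmax : IsLocalMaxOn (fun t => -Real.log ((Aᵀ * (N t)⁻¹ * A).det))
        (Set.Ici (0:ℝ)) 0 := by
      have h1 : ∀ᶠ t in nhdsWithin (0:ℝ) (Set.Ici 0), t < 1 :=
        eventually_nhdsWithin_of_eventually_nhds (eventually_lt_nhds one_pos)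
      filter_upwards [h1, eventually_mem_nhdsWithin] with t ht1 ht0
      simp only [Set.mem_Ici] at ht0
      set w : X → ℝ := fun y => (1 - t) * wstar y + (if y = z then t else 0) with hw
      have hw0' : ∀ y, 0 ≤ w y := by
        intro y
        have : (0:ℝ) ≤ (if y = z then t else 0) := by
          split
          · exact ht0
          · exact le_refl 0
        exact add_nonneg (mul_nonneg (by linarith) (hw0 y)) this
      have hw1' : ∑ y, w y = 1 := by
        rw [hw]
        rw [Finset.sum_add_distrib, ← Finset.mul_sum, hw1,
          Finset.sum_ite_eq' Finset.univ z (fun _ => t)]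
        simp
      have hinfo : ∑ y, w y • m y = N t := by
        calc ∑ y, w y • m y
            = ∑ y, ((1 - t) • (wstar y • m y) + (if y = z then t • m y else 0)) := by
              apply Finset.sum_congr rfl; intro y _
              rw [hw]
              simp only [add_smul, smul_smul, ite_smul, zero_smul]
          _ = (1 - t) • (∑ y, wstar y • m y) + t • m z := by
              rw [Finset.sum_add_distrib, ← Finset.smul_sum,
                Finset.sum_ite_eq' Finset.univ z (fun y => t • m y)]
              simp
          _ = N t := by simp only [hNdef, ← hMmat, ← hB]
      have hpd : (∑ y, w y • m y).PosDef := by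
        rw [hinfo]
        rcases eq_or_lt_of_le ht0 with h | h
        · rw [← h, hN0]; exact hM
        · have hpd1 : ((1 - t) • Mmat).PosDef := by
            rw [Matrix.posDef_iff_dotProduct_mulVec]
            constructor
            · show ((1 - t) • Mmat)ᴴ = _
              rw [Matrix.conjTranspose_smul, star_trivial, hM.1.eq]
            · intro v hv
              rw [Matrix.smul_mulVec, dotProduct_smul, smul_eq_mul]
              exact mul_pos (by linarith) (hM.dotProduct_mulVec_pos hv)
          have hpsd2 : (t • B).PosSemidef := by
            rw [Matrix.posSemidef_iff_dotProduct_mulVec]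
            constructor
            · show (t • B)ᴴ = _
              rw [Matrix.conjTranspose_smul, star_trivial, (hm z).1.eq]
            · intro v
              rw [Matrix.smul_mulVec, dotProduct_smul, smul_eq_mul]
              exact mul_nonneg (le_of_lt h) ((hm z).dotProduct_mulVec_nonneg v)
          exact hpd1.add_posSemidef hpsd2
      have hle := hopt w hw0' hw1' hpd
      rw [hinfo] at hle
      show -Real.log (Aᵀ * (N t)⁻¹ * A).det ≤ -Real.log (Aᵀ * (N 0)⁻¹ * A).det
      rw [hN0, ← hC]
      exact hle
    have cone : (1:ℝ) ∈ posTangentConeAt (Set.Ici (0:ℝ)) 0 := by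
      have hseg : segment ℝ (0:ℝ) (0 + 1) ⊆ Set.Ici 0 := by
        rw [zero_add, segment_eq_Icc zero_le_one]
        exact fun a ha => ha.1
      exact mem_posTangentConeAt_of_segment_subset hseg
    have hnp := hmax.hasFDerivWithinAt_nonpos hlog.hasFDerivAt.hasFDerivWithinAt cone
    simp only [ContinuousLinearMap.toSpanSingleton_apply, ContinuousLinearMap.smulRight_apply, ContinuousLinearMap.one_apply,
      one_smul] at hnp
    -- hnp : -(P * D * A).trace ≤ 0
    -- compute the trace
    have e1 : P * D * A = -(P * (Mmat⁻¹ * B * Mmat⁻¹) * A)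
        + P * (Mmat⁻¹ * Mmat * Mmat⁻¹) * A := by
      rw [hD]
      simp only [Matrix.mul_sub, Matrix.sub_mul, Matrix.mul_neg, Matrix.neg_mul]
      abel
    have e2 : (P * (Mmat⁻¹ * Mmat * Mmat⁻¹) * A).trace = (s : ℝ) := by
      rw [Matrix.nonsing_inv_mul Mmat hMdet, one_mul, hPMA, htr1]
    have e3 : (P * (Mmat⁻¹ * B * Mmat⁻¹) * A).trace = (K * B).trace := by
      have r1 : P * (Mmat⁻¹ * B * Mmat⁻¹) * A = (C⁻¹ * Aᵀ * Mmat⁻¹ * B * Mmat⁻¹) * A := by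
        rw [hP]; simp only [Matrix.mul_assoc]
      have r2 : K * B = Mmat⁻¹ * (A * (C⁻¹ * Aᵀ * Mmat⁻¹ * B)) := by
        rw [hK]; simp only [Matrix.mul_assoc]
      have r3 : A * (C⁻¹ * Aᵀ * Mmat⁻¹ * B * Mmat⁻¹)
          = (A * (C⁻¹ * Aᵀ * Mmat⁻¹ * B)) * Mmat⁻¹ := by
        simp only [Matrix.mul_assoc]
      rw [r1, Matrix.trace_mul_comm, r3, Matrix.trace_mul_comm, ← r2]
    have e4 : (P * D * A).trace = -(K * B).trace + (s : ℝ) := by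
      rw [e1, Matrix.trace_add, Matrix.trace_neg, e3, e2]
    rw [e4] at hnp
    linarith
  -- the average of the sensitivity equals s
  have havg : ∑ y, wstar y * (K * m y).trace = (s : ℝ) := by
    have h1 : K * Mmat = ∑ y, wstar y • (K * m y) := by
      rw [hMmat, Matrix.mul_sum]
      exact Finset.sum_congr rfl fun y _ => (Matrix.mul_smul _ _ _)
    have h2 : (K * Mmat).trace = ∑ y, wstar y * (K * m y).trace := by
      rw [h1, Matrix.trace_sum]
      exact Finset.sum_congr rfl fun y _ => by rw [Matrix.trace_smul, smul_eq_mul]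
    have h3 : K * Mmat = Mmat⁻¹ * A * C⁻¹ * Aᵀ := by
      have r1 : K * Mmat = Mmat⁻¹ * A * C⁻¹ * (Aᵀ * (Mmat⁻¹ * Mmat)) := by
        rw [hK]; simp only [Matrix.mul_assoc]
      rw [r1, Matrix.nonsing_inv_mul Mmat hMdet, Matrix.mul_one]
    have h4 : (Mmat⁻¹ * A * C⁻¹ * Aᵀ).trace = (s : ℝ) := by
      rw [Matrix.trace_mul_comm]
      have r2 : Aᵀ * (Mmat⁻¹ * A * C⁻¹) = Aᵀ * Mmat⁻¹ * A * C⁻¹ := by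
        simp only [Matrix.mul_assoc]
      rw [r2, Matrix.mul_assoc (Aᵀ * Mmat⁻¹) A C⁻¹]
      rw [show Aᵀ * Mmat⁻¹ * (A * C⁻¹) = (Aᵀ * Mmat⁻¹ * A) * C⁻¹ from by
        simp only [Matrix.mul_assoc]]
      rw [← hC, Matrix.mul_nonsing_inv C hCdet, htr1]
    rw [← h2, h3, h4]
  -- conclude
  have hsum0 : ∑ y, wstar y * ((s : ℝ) - (K * m y).trace) = 0 := by
    have : ∑ y, wstar y * ((s : ℝ) - (K * m y).trace)
        = (∑ y, wstar y) * s - ∑ y, wstar y * (K * m y).trace := by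
      rw [Finset.sum_mul]
      rw [← Finset.sum_sub_distrib]
      exact Finset.sum_congr rfl fun y _ => by ring
    rw [this, hw1, one_mul, havg, sub_self]
  have hzero := (Finset.sum_eq_zero_iff_of_nonneg (fun y _ =>
      mul_nonneg (hw0 y) (sub_nonneg.2 (hd_le y)))).1 hsum0 x (Finset.mem_univ x)
  have hgoal : (K * m x).trace = (s : ℝ) := by
    have : (s : ℝ) - (K * m x).trace = 0 := by
      by_contra h
      exact h (by
        have := mul_eq_zero.1 hzero
        rcases this with h1 | h1
        · exact absurd h1 (ne_of_gt hx)
        · exact h1)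
    linarith
  rw [show Mmat⁻¹ * A * C⁻¹ * Aᵀ * Mmat⁻¹ * m x = K * m x from by rw [hK]]
  exact hgoal
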